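/- Let p, q ≥ 1, N = p + q, let (t_i, a_i)_{i=1}^r be a good parameter satisfying the nonvanishing condition, and let λ ∈ ℤ^N be dominant, satisfying the matching condition ν = P ⊔ Q. If some element of I occurs in both ν_{<j} and ν_{>j}, and I ∩ ν_j ≠ ∅, then ν_j ⊆ I, I ⊆ ν_{>j}, and q_j = 0. -/

import Mathlib

open Finset

/-- The multiset `P(λ) = {λ_i − (N−1)/2 + (p−i) : 1 ≤ i ≤ p}` of rationals,
for `N = p + q` and a weight `λ : ℕ → ℤ` (1-based indexing). -/
def Pms (p q : ℕ) (lam : ℕ → ℤ) : Multiset ℚ :=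
  (Finset.Icc 1 p).val.map
    (fun i => (lam i : ℚ) - ((p : ℚ) + (q : ℚ) - 1) / 2 + ((p : ℚ) - (i : ℚ)))

/-- The multiset `Q(λ) = {λ_{p+i} + (N−1)/2 − (i−1) : 1 ≤ i ≤ q}`. -/
def Qms (p q : ℕ) (lam : ℕ → ℤ) : Multiset ℚ :=
  (Finset.Icc 1 q).val.map
    (fun i => (lam (p + i) : ℚ) + ((p : ℚ) + (q : ℚ) - 1) / 2 - ((i : ℚ) - 1))

/-- Dominance: `λ_1 ≥ … ≥ λ_p` and `λ_{p+1} ≥ … ≥ λ_{p+q}`. -/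
def Dominant (p q : ℕ) (lam : ℕ → ℤ) : Prop :=
  (∀ i, 1 ≤ i → i < p → lam (i + 1) ≤ lam i) ∧
  (∀ i, p + 1 ≤ i → i < p + q → lam (i + 1) ≤ lam i)

/-- `p' = #{i : 1 ≤ i ≤ p, λ_i = λ_p}`. -/
def pPrime (p : ℕ) (lam : ℕ → ℤ) : ℕ :=
  ((Finset.Icc 1 p).filter (fun i => lam i = lam p)).card

/-- `q' = #{i : p+1 ≤ i ≤ p+q, λ_i = λ_{p+1}}`. -/
def qPrime (p q : ℕ) (lam : ℕ → ℤ) : ℕ :=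
  ((Finset.Icc (p + 1) (p + q)).filter (fun i => lam i = lam (p + 1))).card

/-- The segment `P' = {λ_p − (N−1)/2 + k : 0 ≤ k ≤ p'−1}`. -/
def Pseg (p q : ℕ) (lam : ℕ → ℤ) : Finset ℚ :=
  (Finset.range (pPrime p lam)).image
    (fun k : ℕ => (lam p : ℚ) - ((p : ℚ) + (q : ℚ) - 1) / 2 + (k : ℚ))

/-- The segment `Q' = {λ_{p+1} + (N−1)/2 − k : 0 ≤ k ≤ q'−1}`. -/
def Qseg (p q : ℕ) (lam : ℕ → ℤ) : Finset ℚ :=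
  (Finset.range (qPrime p q lam)).image
    (fun k : ℕ => (lam (p + 1) : ℚ) + ((p : ℚ) + (q : ℚ) - 1) / 2 - (k : ℚ))

/-- `I = P' ∩ Q'`. -/
def Iseg (p q : ℕ) (lam : ℕ → ℤ) : Finset ℚ := Pseg p q lam ∩ Qseg p q lam

/-- A good parameter `(t_1,a_1),…,(t_r,a_r)` for `U(p,q)` (1-based indexing). -/
structure GoodParam (p q r : ℕ) (t : ℕ → ℤ) (a : ℕ → ℕ) : Prop where
  hr : 1 ≤ r
  hpos : ∀ i ∈ Finset.Icc 1 r, 0 < a i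
  hsum : ∑ i ∈ Finset.Icc 1 r, a i = p + q
  heven : ∀ i ∈ Finset.Icc 1 r, Even (t i + (a i : ℤ) + (p : ℤ) + (q : ℤ))
  hdec : ∀ i, 1 ≤ i → i < r → t (i + 1) ≤ t i
  hadec : ∀ i, 1 ≤ i → i < r → t i = t (i + 1) → a (i + 1) ≤ a i

/-- The segment `ν_i = {(t_i − a_i + 1)/2 + k : 0 ≤ k ≤ a_i − 1}` as a multiset of rationals. -/
def nu (t : ℕ → ℤ) (a : ℕ → ℕ) (i : ℕ) : Multiset ℚ :=
  (Multiset.range (a i)).map (fun k => ((t i : ℚ) - (a i : ℚ) + 1) / 2 + (k : ℚ))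

/-- `ν_{<j} = ν_1 ⊔ … ⊔ ν_{j−1}`. -/
def nuLt (t : ℕ → ℤ) (a : ℕ → ℕ) (j : ℕ) : Multiset ℚ :=
  ∑ k ∈ Finset.Icc 1 (j - 1), nu t a k

/-- `ν_{>j} = ν_{j+1} ⊔ … ⊔ ν_r`. -/
def nuGt (t : ℕ → ℤ) (a : ℕ → ℕ) (r j : ℕ) : Multiset ℚ :=
  ∑ k ∈ Finset.Icc (j + 1) r, nu t a k

/-- `ν = ν_1 ⊔ … ⊔ ν_r`. -/
def nuAll (t : ℕ → ℤ) (a : ℕ → ℕ) (r : ℕ) : Multiset ℚ :=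
  ∑ k ∈ Finset.Icc 1 r, nu t a k

/-- `j` is the least index with `a_1 + … + a_j ≥ p`. -/
structure LeastJ (p r : ℕ) (a : ℕ → ℕ) (j : ℕ) : Prop where
  h1 : 1 ≤ j
  hle : j ≤ r
  hge : p ≤ ∑ ℓ ∈ Finset.Icc 1 j, a ℓ
  hmin : ∀ i, i < j → ∑ ℓ ∈ Finset.Icc 1 i, a ℓ < p

/-- `p_j = p − (a_1 + … + a_{j−1})`. -/
def pj (p : ℕ) (a : ℕ → ℕ) (j : ℕ) : ℕ := p - ∑ ℓ ∈ Finset.Icc 1 (j - 1), a ℓ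

/-- `q_j = q − (a_{j+1} + … + a_r)`. -/
def qj (q r : ℕ) (a : ℕ → ℕ) (j : ℕ) : ℕ := q - ∑ ℓ ∈ Finset.Icc (j + 1) r, a ℓ

/-- The nonvanishing condition: `ν_{<j}` and `ν_{>j}` are multiplicity free,
`#(ν_j ∩ ν_{<j}) ≤ q_j` and `#(ν_j ∩ ν_{>j}) ≤ p_j`. -/
def NonVanishing (p q r : ℕ) (t : ℕ → ℤ) (a : ℕ → ℕ) (j : ℕ) : Prop :=
  (nuLt t a j).Nodup ∧ (nuGt t a r j).Nodup ∧
  Multiset.card ((nu t a j).filter (fun x => x ∈ nuLt t a j)) ≤ qj q r a j ∧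
  Multiset.card ((nu t a j).filter (fun x => x ∈ nuGt t a r j)) ≤ pj p a j


def LatZ (p q : ℕ) (z : ℚ) : Prop := ∃ m : ℤ, z = (1 - (p:ℚ) - (q:ℚ)) / 2 + m

lemma lat_add_int {p q : ℕ} {z : ℚ} (h : LatZ p q z) (n : ℤ) : LatZ p q (z + n) := by
  obtain ⟨m, rfl⟩ := h
  exact ⟨m + n, by push_cast; ring⟩

lemma lat_succ_le {p q : ℕ} {u v : ℚ} (hu : LatZ p q u) (hv : LatZ p q v) (h : u < v) :
    u + 1 ≤ v := by
  obtain ⟨m, rfl⟩ := hu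
  obtain ⟨m', rfl⟩ := hv
  have h1 : (m:ℚ) < m' := by linarith
  have h2 : m + 1 ≤ m' := by exact_mod_cast h1
  have h3 : ((m:ℚ)) + 1 ≤ m' := by exact_mod_cast h2
  linarith

lemma step_antitone {f : ℕ → ℤ} {lo hi : ℕ}
    (h : ∀ i, lo ≤ i → i < hi → f (i + 1) ≤ f i) :
    ∀ i' i, lo ≤ i → i ≤ i' → i' ≤ hi → f i' ≤ f i := by
  intro i'
  induction i' with
  | zero => intro i _ h2 _; have : i = 0 := by omega
            subst this; exact le_rfl
  | succ n ih =>
    intro i h1 h2 h3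
    rcases Nat.eq_or_lt_of_le h2 with rfl | hlt
    · exact le_rfl
    · exact (h n (by omega) (by omega)).trans (ih i h1 (by omega) (by omega))

lemma sum_split {M : Type*} [AddCommMonoid M] (f : ℕ → M) {j r : ℕ} (h1 : 1 ≤ j) (h2 : j ≤ r) :
    ∑ i ∈ Finset.Icc 1 r, f i
      = (∑ i ∈ Finset.Icc 1 (j-1), f i) + f j + ∑ i ∈ Finset.Icc (j+1) r, f i := by
  have e1 : Finset.Icc 1 r = Finset.Icc 1 (j-1) ∪ Finset.Icc j r := by
    ext n; simp only [Finset.mem_Icc, Finset.mem_union]; omega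
  have hd : Disjoint (Finset.Icc 1 (j-1)) (Finset.Icc j r) := by
    simp only [Finset.disjoint_left, Finset.mem_Icc]
    intro n hn hn'; omega
  have e2 : Finset.Icc j r = insert j (Finset.Icc (j+1) r) := by
    ext n; simp only [Finset.mem_Icc, Finset.mem_insert]; omega
  have hjn : j ∉ Finset.Icc (j+1) r := by simp [Finset.mem_Icc]
  rw [e1, Finset.sum_union hd, e2, Finset.sum_insert hjn, add_assoc]
lemma nu_mem_iff (t : ℕ → ℤ) (a : ℕ → ℕ) (i : ℕ) (z : ℚ) :
    z ∈ nu t a i ↔ ∃ k : ℕ, k < a i ∧ z = ((t i : ℚ) - (a i : ℚ) + 1) / 2 + (k:ℚ) := by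
  simp [nu, Multiset.mem_map, Multiset.mem_range, eq_comm]

lemma nu_char {p q r : ℕ} {t : ℕ → ℤ} {a : ℕ → ℕ} (hgp : GoodParam p q r t a)
    {i : ℕ} (hi1 : 1 ≤ i) (hi2 : i ≤ r) {z : ℚ} :
    z ∈ nu t a i ↔
      ((t i : ℚ) - (a i : ℚ) + 1) / 2 ≤ z ∧ z ≤ ((t i : ℚ) + (a i : ℚ) - 1) / 2 ∧ LatZ p q z := by
  have hmem : i ∈ Finset.Icc 1 r := by simp only [Finset.mem_Icc]; omega
  have hpos : 0 < a i := hgp.hpos i hmem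
  obtain ⟨c, hc⟩ := hgp.heven i hmem
  have hcQ : (t i : ℚ) + (a i : ℚ) + (p : ℚ) + (q : ℚ) = (c : ℚ) + (c : ℚ) := by
    exact_mod_cast hc
  rw [nu_mem_iff]
  constructor
  · rintro ⟨k, hk, rfl⟩
    have hk' : (k : ℚ) + 1 ≤ (a i : ℚ) := by exact_mod_cast hk
    have hk0 : (0 : ℚ) ≤ (k : ℚ) := Nat.cast_nonneg k
    refine ⟨by linarith, by linarith, ⟨c - (a i : ℤ) + (k : ℤ), ?_⟩⟩
    push_cast
    linarith
  · rintro ⟨h1, h2, m, hz⟩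
    obtain ⟨d, hd⟩ : ∃ d : ℤ, d = m - c + (a i : ℤ) := ⟨_, rfl⟩
    have hzd : z = ((t i : ℚ) - (a i : ℚ) + 1) / 2 + (d : ℚ) := by
      rw [hz, hd]; push_cast; linarith
    rw [hzd] at h1 h2
    have hd0' : 0 ≤ d := by
      have : (0 : ℚ) ≤ (d : ℚ) := by linarith
      exact_mod_cast this
    have hda' : d < (a i : ℤ) := by
      have h3 : (d : ℚ) < (a i : ℚ) := by linarith
      exact_mod_cast h3
    refine ⟨d.toNat, by omega, ?_⟩
    rw [hzd]
    congr 1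
    exact_mod_cast (Int.toNat_of_nonneg hd0').symm

lemma lat_nu_left {p q r : ℕ} {t : ℕ → ℤ} {a : ℕ → ℕ} (hgp : GoodParam p q r t a)
    {i : ℕ} (hi1 : 1 ≤ i) (hi2 : i ≤ r) :
    LatZ p q (((t i : ℚ) - (a i : ℚ) + 1) / 2) := by
  have hmem : i ∈ Finset.Icc 1 r := by simp only [Finset.mem_Icc]; omega
  obtain ⟨c, hc⟩ := hgp.heven i hmem
  have hcQ : (t i : ℚ) + (a i : ℚ) + (p : ℚ) + (q : ℚ) = (c : ℚ) + (c : ℚ) := by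
    exact_mod_cast hc
  exact ⟨c - (a i : ℤ), by push_cast; linarith⟩
lemma Pms_mem_iff (p q : ℕ) (lam : ℕ → ℤ) (z : ℚ) :
    z ∈ Pms p q lam ↔ ∃ i : ℕ, 1 ≤ i ∧ i ≤ p ∧
      z = (lam i : ℚ) - ((p : ℚ) + (q : ℚ) - 1) / 2 + ((p : ℚ) - (i : ℚ)) := by
  simp [Pms, Multiset.mem_map, Finset.mem_Icc, eq_comm]
  constructor
  · rintro ⟨i, ⟨h1, h2⟩, h3⟩; exact ⟨i, h1, h2, h3⟩
  · rintro ⟨i, h1, h2, h3⟩; exact ⟨i, ⟨h1, h2⟩, h3⟩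

lemma Qms_mem_iff (p q : ℕ) (lam : ℕ → ℤ) (z : ℚ) :
    z ∈ Qms p q lam ↔ ∃ i : ℕ, 1 ≤ i ∧ i ≤ q ∧
      z = (lam (p + i) : ℚ) + ((p : ℚ) + (q : ℚ) - 1) / 2 - ((i : ℚ) - 1) := by
  simp [Qms, Multiset.mem_map, Finset.mem_Icc, eq_comm]
  constructor
  · rintro ⟨i, ⟨h1, h2⟩, h3⟩; exact ⟨i, h1, h2, h3⟩
  · rintro ⟨i, h1, h2, h3⟩; exact ⟨i, ⟨h1, h2⟩, h3⟩

lemma Pms_nodup {p q : ℕ} {lam : ℕ → ℤ}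
    (hmono : ∀ i' i, 1 ≤ i → i ≤ i' → i' ≤ p → lam i' ≤ lam i) :
    (Pms p q lam).Nodup := by
  apply Multiset.Nodup.map_on _ (Finset.Icc 1 p).nodup
  intro i hi i' hi' heq
  rw [Finset.mem_val, Finset.mem_Icc] at hi hi'
  by_contra hne
  rcases Nat.lt_or_ge i i' with hlt | hge
  · have h1 : lam i' ≤ lam i := hmono i' i hi.1 (le_of_lt hlt) hi'.2
    have h2 : (i : ℚ) < (i' : ℚ) := by exact_mod_cast hlt
    have h3 : (lam i' : ℚ) ≤ (lam i : ℚ) := by exact_mod_cast h1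
    have : (lam i : ℚ) + ((i' : ℚ) - (i : ℚ)) ≤ (lam i' : ℚ) := by linarith [heq]
    linarith
  · have hlt : i' < i := by omega
    have h1 : lam i ≤ lam i' := hmono i i' hi'.1 (le_of_lt hlt) hi.2
    have h2 : (i' : ℚ) < (i : ℚ) := by exact_mod_cast hlt
    have h3 : (lam i : ℚ) ≤ (lam i' : ℚ) := by exact_mod_cast h1
    have : (lam i' : ℚ) + ((i : ℚ) - (i' : ℚ)) ≤ (lam i : ℚ) := by linarith [heq]
    linarith

lemma Qms_nodup {p q : ℕ} {lam : ℕ → ℤ}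
    (hmono : ∀ i' i, p + 1 ≤ i → i ≤ i' → i' ≤ p + q → lam i' ≤ lam i) :
    (Qms p q lam).Nodup := by
  apply Multiset.Nodup.map_on _ (Finset.Icc 1 q).nodup
  intro i hi i' hi' heq
  rw [Finset.mem_val, Finset.mem_Icc] at hi hi'
  by_contra hne
  rcases Nat.lt_or_ge i i' with hlt | hge
  · have h1 : lam (p + i') ≤ lam (p + i) := hmono (p + i') (p + i) (by omega) (by omega) (by omega)
    have h2 : (i : ℚ) < (i' : ℚ) := by exact_mod_cast hlt
    have h3 : (lam (p + i') : ℚ) ≤ (lam (p + i) : ℚ) := by exact_mod_cast h1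
    linarith [heq]
  · have hlt : i' < i := by omega
    have h1 : lam (p + i) ≤ lam (p + i') := hmono (p + i) (p + i') (by omega) (by omega) (by omega)
    have h2 : (i' : ℚ) < (i : ℚ) := by exact_mod_cast hlt
    have h3 : (lam (p + i) : ℚ) ≤ (lam (p + i') : ℚ) := by exact_mod_cast h1
    linarith [heq]
lemma pPrime_pos {p : ℕ} (hp : 1 ≤ p) (lam : ℕ → ℤ) : 1 ≤ pPrime p lam := by
  rw [pPrime]
  have : p ∈ (Finset.Icc 1 p).filter (fun i => lam i = lam p) := by
    simp [Finset.mem_Icc, hp]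
  exact Finset.card_pos.mpr ⟨p, this⟩

lemma pPrime_le (p : ℕ) (lam : ℕ → ℤ) : pPrime p lam ≤ p := by
  rw [pPrime]
  calc ((Finset.Icc 1 p).filter (fun i => lam i = lam p)).card
      ≤ (Finset.Icc 1 p).card := Finset.card_filter_le _ _
    _ = p := by rw [Nat.card_Icc]; omega

lemma qPrime_pos {p q : ℕ} (hq : 1 ≤ q) (lam : ℕ → ℤ) : 1 ≤ qPrime p q lam := by
  rw [qPrime]
  have : p + 1 ∈ (Finset.Icc (p+1) (p+q)).filter (fun i => lam i = lam (p+1)) := by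
    simp [Finset.mem_Icc]; omega
  exact Finset.card_pos.mpr ⟨p + 1, this⟩

lemma qPrime_le (p q : ℕ) (lam : ℕ → ℤ) : qPrime p q lam ≤ q := by
  rw [qPrime]
  calc ((Finset.Icc (p+1) (p+q)).filter (fun i => lam i = lam (p+1))).card
      ≤ (Finset.Icc (p+1) (p+q)).card := Finset.card_filter_le _ _
    _ = q := by rw [Nat.card_Icc]; omega

lemma lam_eq_of_lt_pPrime {p : ℕ} {lam : ℕ → ℤ} (hp : 1 ≤ p)
    (hmono : ∀ i' i, 1 ≤ i → i ≤ i' → i' ≤ p → lam i' ≤ lam i)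
    {k : ℕ} (hk : k < pPrime p lam) : lam (p - k) = lam p := by
  have hkp : k < p := lt_of_lt_of_le hk (pPrime_le p lam)
  by_contra hne
  have hge : lam p ≤ lam (p - k) := hmono p (p - k) (by omega) (by omega) le_rfl
  have hlt : lam p < lam (p - k) := lt_of_le_of_ne hge (fun h => hne h.symm)
  have hsub : (Finset.Icc 1 p).filter (fun i => lam i = lam p) ⊆ Finset.Icc (p - k + 1) p := by
    intro i hi
    rw [Finset.mem_filter, Finset.mem_Icc] at hi
    rw [Finset.mem_Icc]
    refine ⟨?_, hi.1.2⟩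
    by_contra hle
    have hile : i ≤ p - k := by omega
    have : lam (p - k) ≤ lam i := hmono (p - k) i hi.1.1 hile (by omega)
    omega
  have hcard : pPrime p lam ≤ (Finset.Icc (p - k + 1) p).card := by
    rw [pPrime]; exact Finset.card_le_card hsub
  rw [Nat.card_Icc] at hcard
  omega

lemma lam_eq_of_le_qPrime {p q : ℕ} {lam : ℕ → ℤ} (hq : 1 ≤ q)
    (hmono : ∀ i' i, p + 1 ≤ i → i ≤ i' → i' ≤ p + q → lam i' ≤ lam i)
    {i : ℕ} (h1 : 1 ≤ i) (h2 : i ≤ qPrime p q lam) : lam (p + i) = lam (p + 1) := by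
  have hiq : i ≤ q := le_trans h2 (qPrime_le p q lam)
  by_contra hne
  have hge : lam (p + i) ≤ lam (p + 1) := hmono (p + i) (p + 1) le_rfl (by omega) (by omega)
  have hlt : lam (p + i) < lam (p + 1) := lt_of_le_of_ne hge hne
  have hsub : (Finset.Icc (p+1) (p+q)).filter (fun ℓ => lam ℓ = lam (p+1))
      ⊆ Finset.Icc (p + 1) (p + i - 1) := by
    intro ℓ hℓ
    rw [Finset.mem_filter, Finset.mem_Icc] at hℓ
    rw [Finset.mem_Icc]
    refine ⟨hℓ.1.1, ?_⟩
    by_contra hle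
    have : p + i ≤ ℓ := by omega
    have : lam ℓ ≤ lam (p + i) := hmono ℓ (p + i) (by omega) this hℓ.1.2
    omega
  have hcard : qPrime p q lam ≤ (Finset.Icc (p + 1) (p + i - 1)).card := by
    rw [qPrime]; exact Finset.card_le_card hsub
  rw [Nat.card_Icc] at hcard
  omega

lemma lam_lt_of_gt_qPrime {p q : ℕ} {lam : ℕ → ℤ}
    (hmono : ∀ i' i, p + 1 ≤ i → i ≤ i' → i' ≤ p + q → lam i' ≤ lam i)
    {i : ℕ} (h1 : qPrime p q lam < i) (h2 : i ≤ q) : lam (p + i) < lam (p + 1) := by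
  by_contra hge
  push_neg at hge
  have hle : lam (p + i) ≤ lam (p + 1) := hmono (p + i) (p + 1) le_rfl (by omega) (by omega)
  have heq : lam (p + i) = lam (p + 1) := le_antisymm hle hge
  have hsub : Finset.Icc (p + 1) (p + i) ⊆
      (Finset.Icc (p+1) (p+q)).filter (fun ℓ => lam ℓ = lam (p+1)) := by
    intro ℓ hℓ
    rw [Finset.mem_Icc] at hℓ
    rw [Finset.mem_filter, Finset.mem_Icc]
    refine ⟨⟨hℓ.1, by omega⟩, ?_⟩
    have ha : lam ℓ ≤ lam (p + 1) := hmono ℓ (p + 1) le_rfl hℓ.1 (by omega)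
    have hb : lam (p + i) ≤ lam ℓ := hmono (p + i) ℓ hℓ.1 hℓ.2 (by omega)
    omega
  have hcard : (Finset.Icc (p + 1) (p + i)).card ≤ qPrime p q lam := by
    rw [qPrime]; exact Finset.card_le_card hsub
  rw [Nat.card_Icc] at hcard
  omega
lemma Pseg_char {p q : ℕ} (hp : 1 ≤ p) (lam : ℕ → ℤ) (z : ℚ) :
    z ∈ Pseg p q lam ↔
      (lam p : ℚ) - ((p : ℚ) + (q : ℚ) - 1) / 2 ≤ z ∧
      z ≤ (lam p : ℚ) - ((p : ℚ) + (q : ℚ) - 1) / 2 + (pPrime p lam : ℚ) - 1 ∧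
      LatZ p q z := by
  have hp' := pPrime_pos hp lam
  rw [Pseg]
  simp only [Finset.mem_image, Finset.mem_range]
  constructor
  · rintro ⟨k, hk, rfl⟩
    have hk' : (k : ℚ) + 1 ≤ (pPrime p lam : ℚ) := by exact_mod_cast hk
    have hk0 : (0 : ℚ) ≤ (k : ℚ) := Nat.cast_nonneg k
    refine ⟨by linarith, by linarith, ⟨lam p + (k : ℤ), ?_⟩⟩
    push_cast; ring
  · rintro ⟨h1, h2, m, hz⟩
    obtain ⟨d, hd⟩ : ∃ d : ℤ, d = m - lam p + ((p:ℤ) + q - 1) - ((p:ℤ) + q - 1) := ⟨_, rfl⟩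
    have hd' : d = m - lam p := by omega
    have hzd : z = (lam p : ℚ) - ((p : ℚ) + (q : ℚ) - 1) / 2 + (d : ℚ) := by
      rw [hz, hd']; push_cast; ring
    rw [hzd] at h1 h2
    have hd0 : 0 ≤ d := by
      have : (0 : ℚ) ≤ (d : ℚ) := by linarith
      exact_mod_cast this
    have hdlt : d < (pPrime p lam : ℤ) := by
      have : (d : ℚ) < (pPrime p lam : ℚ) := by linarith
      exact_mod_cast this
    refine ⟨d.toNat, by omega, ?_⟩
    rw [hzd]
    congr 1
    exact_mod_cast Int.toNat_of_nonneg hd0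

lemma Qseg_char {p q : ℕ} (hq : 1 ≤ q) (lam : ℕ → ℤ) (z : ℚ) :
    z ∈ Qseg p q lam ↔
      (lam (p+1) : ℚ) + ((p : ℚ) + (q : ℚ) - 1) / 2 - (qPrime p q lam : ℚ) + 1 ≤ z ∧
      z ≤ (lam (p+1) : ℚ) + ((p : ℚ) + (q : ℚ) - 1) / 2 ∧
      LatZ p q z := by
  have hq' := qPrime_pos (p := p) hq lam
  rw [Qseg]
  simp only [Finset.mem_image, Finset.mem_range]
  constructor
  · rintro ⟨k, hk, rfl⟩
    have hk' : (k : ℚ) + 1 ≤ (qPrime p q lam : ℚ) := by exact_mod_cast hk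
    have hk0 : (0 : ℚ) ≤ (k : ℚ) := Nat.cast_nonneg k
    refine ⟨by linarith, by linarith, ⟨lam (p+1) + (p:ℤ) + q - 1 - (k : ℤ), ?_⟩⟩
    push_cast; ring
  · rintro ⟨h1, h2, m, hz⟩
    obtain ⟨d, hd⟩ : ∃ d : ℤ, d = lam (p+1) + (p:ℤ) + q - 1 - m := ⟨_, rfl⟩
    have hzd : z = (lam (p+1) : ℚ) + ((p : ℚ) + (q : ℚ) - 1) / 2 - (d : ℚ) := by
      rw [hz, hd]; push_cast; ring
    rw [hzd] at h1 h2
    have hd0 : 0 ≤ d := by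
      have : (0 : ℚ) ≤ (d : ℚ) := by linarith
      exact_mod_cast this
    have hdlt : d < (qPrime p q lam : ℤ) := by
      have : (d : ℚ) < (qPrime p q lam : ℚ) := by linarith
      exact_mod_cast this
    refine ⟨d.toNat, by omega, ?_⟩
    rw [hzd]
    congr 1
    exact_mod_cast Int.toNat_of_nonneg hd0
theorem statement7 (p q r j : ℕ) (hp : 1 ≤ p) (hq : 1 ≤ q) (t : ℕ → ℤ) (a : ℕ → ℕ)
    (hgp : GoodParam p q r t a) (hj : LeastJ p r a j)
    (hnv : NonVanishing p q r t a j)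
    (lam : ℕ → ℤ) (hdom : Dominant p q lam)
    (hmatch : nuAll t a r = Pms p q lam + Qms p q lam)
    (h1 : ∃ x ∈ Iseg p q lam, x ∈ nuLt t a j ∧ x ∈ nuGt t a r j)
    (h2 : ∃ x ∈ Iseg p q lam, x ∈ nu t a j) :
    (∀ x ∈ nu t a j, x ∈ Iseg p q lam) ∧
    (∀ x ∈ Iseg p q lam, x ∈ nuGt t a r j) ∧
    qj q r a j = 0 := by
  obtain ⟨x, hxI, hxLt, hxGt⟩ := h1
  obtain ⟨y, hyI, hyj⟩ := h2
  rw [NonVanishing] at hnv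
  obtain ⟨hndLt, hndGt, hfLt, hfGt⟩ := hnv
  have hj1 : 1 ≤ j := hj.h1
  have hjr : j ≤ r := hj.hle
  have lamP := step_antitone hdom.1
  have lamQ := step_antitone hdom.2
  have tmono := step_antitone hgp.hdec
  -- abbreviations
  obtain ⟨mP, hmP⟩ : ∃ v : ℚ, v = (lam p : ℚ) - ((p : ℚ) + (q : ℚ) - 1) / 2 := ⟨_, rfl⟩
  obtain ⟨MQ, hMQ⟩ : ∃ v : ℚ, v = (lam (p+1) : ℚ) + ((p : ℚ) + (q : ℚ) - 1) / 2 := ⟨_, rfl⟩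
  obtain ⟨α, hα⟩ : ∃ v : ℚ, v = max mP (MQ - (qPrime p q lam : ℚ) + 1) := ⟨_, rfl⟩
  obtain ⟨β, hβ⟩ : ∃ v : ℚ, v = min (mP + (pPrime p lam : ℚ) - 1) MQ := ⟨_, rfl⟩
  obtain ⟨lj, hlj⟩ : ∃ v : ℚ, v = ((t j : ℚ) - (a j : ℚ) + 1) / 2 := ⟨_, rfl⟩
  obtain ⟨hjv, hhjv⟩ : ∃ v : ℚ, v = ((t j : ℚ) + (a j : ℚ) - 1) / 2 := ⟨_, rfl⟩
  have hsumlh : lj + hjv = (t j : ℚ) := by rw [hlj, hhjv]; ring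
  -- characterizations
  have hIchar : ∀ z : ℚ, z ∈ Iseg p q lam ↔ α ≤ z ∧ z ≤ β ∧ LatZ p q z := by
    intro z
    rw [Iseg, Finset.mem_inter, Pseg_char hp lam z, Qseg_char hq lam z, hα, hβ, ← hmP, ← hMQ,
        max_le_iff, le_min_iff]
    constructor
    · rintro ⟨⟨a1, a2, l⟩, b1, b2, -⟩; exact ⟨⟨a1, b1⟩, ⟨a2, b2⟩, l⟩
    · rintro ⟨⟨a1, b1⟩, ⟨a2, b2⟩, l⟩; exact ⟨⟨a1, a2, l⟩, b1, b2, l⟩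
  have hnujchar : ∀ z : ℚ, z ∈ nu t a j ↔ lj ≤ z ∧ z ≤ hjv ∧ LatZ p q z := by
    intro z; rw [nu_char hgp hj1 hjr, ← hlj, ← hhjv]
  have hmemLt : ∀ z : ℚ, z ∈ nuLt t a j ↔ ∃ k, (1 ≤ k ∧ k ≤ j - 1) ∧ z ∈ nu t a k := by
    intro z; simp only [nuLt, Multiset.mem_sum, Finset.mem_Icc]
  have hmemGt : ∀ z : ℚ, z ∈ nuGt t a r j ↔ ∃ m, (j + 1 ≤ m ∧ m ≤ r) ∧ z ∈ nu t a m := by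
    intro z; simp only [nuGt, Multiset.mem_sum, Finset.mem_Icc]
  -- lattice facts
  have hLatlj : LatZ p q lj := by rw [hlj]; exact lat_nu_left hgp hj1 hjr
  have hLathj : LatZ p q hjv := by
    have h0 := lat_add_int hLatlj ((a j : ℤ) - 1)
    have e : hjv = lj + (((a j : ℤ) - 1 : ℤ) : ℚ) := by rw [hlj, hhjv]; push_cast; ring
    rw [e]; exact h0
  have hLatmP : LatZ p q mP := ⟨lam p, by rw [hmP]; push_cast; ring⟩
  have hLatMQ : LatZ p q MQ := ⟨lam (p+1) + (p : ℤ) + q - 1, by rw [hMQ]; push_cast; ring⟩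
  have hLatα : LatZ p q α := by
    rw [hα]
    rcases max_cases mP (MQ - (qPrime p q lam : ℚ) + 1) with ⟨h, -⟩ | ⟨h, -⟩ <;> rw [h]
    · exact hLatmP
    · have h0 := lat_add_int hLatMQ (1 - (qPrime p q lam : ℤ))
      have e : MQ - (qPrime p q lam : ℚ) + 1 = MQ + (((1 : ℤ) - (qPrime p q lam : ℤ) : ℤ) : ℚ) := by
        push_cast; ring
      rw [e]; exact h0
  -- I ⊆ Pms, I ⊆ Qms
  have hIP : ∀ z ∈ Iseg p q lam, z ∈ Pms p q lam := by
    intro z hz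
    have hzP : z ∈ Pseg p q lam := (Finset.mem_inter.mp hz).1
    rw [Pseg] at hzP
    obtain ⟨k, hk, rfl⟩ := Finset.mem_image.mp hzP
    rw [Finset.mem_range] at hk
    have hkp : k < p := lt_of_lt_of_le hk (pPrime_le p lam)
    have heqk : lam (p - k) = lam p := lam_eq_of_lt_pPrime hp lamP hk
    rw [Pms_mem_iff]
    refine ⟨p - k, by omega, by omega, ?_⟩
    rw [heqk]
    have e : ((p - k : ℕ) : ℚ) = (p : ℚ) - (k : ℚ) := by
      have h' := Nat.cast_sub (R := ℚ) hkp.le; exact_mod_cast h'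
    rw [e]; ring
  have hIQ : ∀ z ∈ Iseg p q lam, z ∈ Qms p q lam := by
    intro z hz
    have hzQ : z ∈ Qseg p q lam := (Finset.mem_inter.mp hz).2
    rw [Qseg] at hzQ
    obtain ⟨k, hk, rfl⟩ := Finset.mem_image.mp hzQ
    rw [Finset.mem_range] at hk
    have hkq : k < q := lt_of_lt_of_le hk (qPrime_le p q lam)
    have heqk : lam (p + (k + 1)) = lam (p + 1) :=
      lam_eq_of_le_qPrime hq lamQ (by omega) (by omega)
    rw [Qms_mem_iff]
    refine ⟨k + 1, by omega, by omega, ?_⟩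
    rw [heqk]
    push_cast
    ring
  -- counting
  have hPnd : (Pms p q lam).Nodup := Pms_nodup lamP
  have hQnd : (Qms p q lam).Nodup := Qms_nodup lamQ
  have hsplitNu : nuAll t a r = nuLt t a j + nu t a j + nuGt t a r j := by
    rw [nuAll, nuLt, nuGt]; exact sum_split _ hj1 hjr
  have hc2 : ∀ z ∈ Iseg p q lam,
      Multiset.count z (nuLt t a j) + Multiset.count z (nu t a j)
        + Multiset.count z (nuGt t a r j) = 2 := by
    intro z hz
    have h0 : Multiset.count z (nuAll t a r) = 2 := by
      rw [hmatch, Multiset.count_add, Multiset.count_eq_one_of_mem hPnd (hIP z hz),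
          Multiset.count_eq_one_of_mem hQnd (hIQ z hz)]
    rw [hsplitNu, Multiset.count_add, Multiset.count_add] at h0
    exact h0
  have hcLle : ∀ z, Multiset.count z (nuLt t a j) ≤ 1 :=
    Multiset.nodup_iff_count_le_one.mp hndLt
  have hcGle : ∀ z, Multiset.count z (nuGt t a r j) ≤ 1 :=
    Multiset.nodup_iff_count_le_one.mp hndGt
  have hcardnu : Multiset.card (nu t a j) = a j := by simp [nu]
  -- sums of a
  have hSsum : (∑ i ∈ Finset.Icc 1 (j-1), a i) + a j + (∑ i ∈ Finset.Icc (j+1) r, a i)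
      = p + q := by rw [← sum_split a hj1 hjr]; exact hgp.hsum
  have hSlt : (∑ i ∈ Finset.Icc 1 (j-1), a i) < p := hj.hmin (j-1) (by omega)
  have hSle : p ≤ (∑ i ∈ Finset.Icc 1 (j-1), a i) + a j := by
    have h0 := hj.hge
    have e : ∑ ℓ ∈ Finset.Icc 1 j, a ℓ
        = (∑ i ∈ Finset.Icc 1 (j-1), a i) + a j + ∑ i ∈ Finset.Icc (j+1) j, a i :=
      sum_split a hj1 le_rfl
    rw [Finset.Icc_eq_empty (a := j+1) (b := j) (by omega), Finset.sum_empty] at e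
    omega
  -- basic bounds for x and y
  have hxb := (hIchar x).1 hxI
  have hyb := (hIchar y).1 hyI
  have hyjb := (hnujchar y).1 hyj
  -- Fact W : lj ≤ x
  have hxlj : lj ≤ x := by
    by_contra hlt
    push_neg at hlt
    obtain ⟨k, ⟨hk1, hk2⟩, hxk⟩ := (hmemLt x).1 hxLt
    have hkr : k ≤ r := by omega
    have htk : t j ≤ t k := tmono j k hk1 (by omega) hjr
    have htkQ : (t j : ℚ) ≤ (t k : ℚ) := by exact_mod_cast htk
    have hxkb := (nu_char hgp hk1 hkr).1 hxk
    have hx1 : x + 1 ≤ lj := lat_succ_le hxb.2.2 hLatlj hlt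
    have hcov : ∀ u ∈ nu t a j, u ∈ nu t a k := by
      intro u hu
      have hub := (hnujchar u).1 hu
      refine (nu_char hgp hk1 hkr).2 ⟨by linarith [hxkb.1, hub.1], ?_, hub.2.2⟩
      have hlk : ((t k : ℚ) + a k - 1) / 2 = (t k : ℚ) - ((t k : ℚ) - a k + 1) / 2 := by ring
      linarith [hxkb.1, hub.2.1]
    have hfull : (nu t a j).filter (fun x => x ∈ nuLt t a j) = nu t a j :=
      Multiset.filter_eq_self.mpr (fun u hu => (hmemLt u).2 ⟨k, ⟨hk1, hk2⟩, hcov u hu⟩)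
    rw [hfull, hcardnu, qj] at hfLt
    omega
  -- x is not in nu j, hence above hjv
  have hxnj : x ∉ nu t a j := by
    intro hmem
    have h0 := hc2 x hxI
    have c1 : 1 ≤ Multiset.count x (nuLt t a j) := Multiset.one_le_count_iff_mem.mpr hxLt
    have c2 : 1 ≤ Multiset.count x (nuGt t a r j) := Multiset.one_le_count_iff_mem.mpr hxGt
    have c3 : 1 ≤ Multiset.count x (nu t a j) := Multiset.one_le_count_iff_mem.mpr hmem
    omega
  have hhjx : hjv < x := by
    by_contra hle
    push_neg at hle
    exact hxnj ((hnujchar x).2 ⟨hxlj, hle, hxb.2.2⟩)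
  -- the segment m > j containing hjv + 1
  have hLatw' : LatZ p q (hjv + 1) := by
    have h0 := lat_add_int hLathj 1
    simpa using h0
  have hw'x : hjv + 1 ≤ x := lat_succ_le hLathj hxb.2.2 hhjx
  have hw'I : hjv + 1 ∈ Iseg p q lam :=
    (hIchar _).2 ⟨by linarith [hyb.1, hyjb.2.1], by linarith [hxb.2.1], hLatw'⟩
  have hw'nj : (hjv + 1) ∉ nu t a j := by
    intro hmem
    have h0 := ((hnujchar _).1 hmem).2.1
    linarith
  have hw'G : (hjv + 1) ∈ nuGt t a r j := by
    have h2 := hc2 _ hw'I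
    have hJ0 : Multiset.count (hjv + 1) (nu t a j) = 0 := Multiset.count_eq_zero.mpr hw'nj
    have hL := hcLle (hjv + 1)
    rw [← Multiset.one_le_count_iff_mem]
    omega
  obtain ⟨m, ⟨hm1, hm2⟩, hw'm⟩ := (hmemGt _).1 hw'G
  have htm : t m ≤ t j := tmono m j hj1 (by omega) hm2
  have htmQ : (t m : ℚ) ≤ (t j : ℚ) := by exact_mod_cast htm
  have hw'mb := (nu_char hgp (by omega) hm2).1 hw'm
  have hlm : ((t m : ℚ) - a m + 1) / 2 ≤ lj - 1 := by
    have e : ((t m : ℚ) - a m + 1) / 2 = (t m : ℚ) - ((t m : ℚ) + a m - 1) / 2 := by ring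
    linarith [hw'mb.2.1]
  -- A-lower : α ≤ lj
  have hαlj : α ≤ lj := by
    by_contra hlt
    push_neg at hlt
    have hα1 : lj + 1 ≤ α := lat_succ_le hLatlj hLatα hlt
    have hLatα1 : LatZ p q (α - 1) := by
      have h0 := lat_add_int hLatα (-1)
      have e : α - 1 = α + ((-1 : ℤ) : ℚ) := by push_cast; ring
      rw [e]; exact h0
    have hα1j : α - 1 ∈ nu t a j :=
      (hnujchar _).2 ⟨by linarith, by linarith [hyb.1, hyjb.2.1], hLatα1⟩
    have hα1m : α - 1 ∈ nu t a m :=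
      (nu_char hgp (by omega) hm2).2
        ⟨by linarith [hlm], by linarith [hyb.1, hyjb.2.1, hw'mb.2.1], hLatα1⟩
    have hbd : Multiset.count (α - 1) (nuAll t a r) ≤ 1 := by
      rw [hmatch, Multiset.count_add]
      rcases le_or_gt (MQ - (qPrime p q lam : ℚ) + 1) mP with hcase | hcase
      · have hαeq : α = mP := by rw [hα]; exact max_eq_left hcase
        have hnot : α - 1 ∉ Pms p q lam := by
          rw [Pms_mem_iff]
          rintro ⟨i, hi1, hi2, heq⟩
          have hlam : lam p ≤ lam i := lamP p i hi1 hi2 le_rfl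
          have hlamQ : (lam p : ℚ) ≤ (lam i : ℚ) := by exact_mod_cast hlam
          have hpi : (i : ℚ) ≤ (p : ℚ) := by exact_mod_cast hi2
          rw [hαeq, hmP] at heq
          linarith
        rw [Multiset.count_eq_zero.mpr hnot]
        simpa using Multiset.nodup_iff_count_le_one.mp hQnd (α - 1)
      · have hαeq : α = MQ - (qPrime p q lam : ℚ) + 1 := by rw [hα]; exact max_eq_right hcase.le
        have hnot : α - 1 ∉ Qms p q lam := by
          rw [Qms_mem_iff]
          rintro ⟨i, hi1, hi2, heq⟩
          rw [hαeq, hMQ] at heq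
          rcases le_or_gt i (qPrime p q lam) with hle' | hlt'
          · have heqlam : lam (p + i) = lam (p + 1) := lam_eq_of_le_qPrime hq lamQ hi1 hle'
            rw [heqlam] at heq
            have hiq : (i : ℚ) ≤ (qPrime p q lam : ℚ) := by exact_mod_cast hle'
            linarith
          · have hlam := lam_lt_of_gt_qPrime lamQ hlt' hi2
            have hl1 : (lam (p + i) : ℚ) + 1 ≤ (lam (p + 1) : ℚ) := by exact_mod_cast hlam
            have hiq : (qPrime p q lam : ℚ) + 1 ≤ (i : ℚ) := by exact_mod_cast hlt'
            linarith
        rw [Multiset.count_eq_zero.mpr hnot]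
        simpa using Multiset.nodup_iff_count_le_one.mp hPnd (α - 1)
    have hge2 : 2 ≤ Multiset.count (α - 1) (nuAll t a r) := by
      rw [hsplitNu, Multiset.count_add, Multiset.count_add]
      have c1 : 1 ≤ Multiset.count (α - 1) (nu t a j) :=
        Multiset.one_le_count_iff_mem.mpr hα1j
      have c2 : 1 ≤ Multiset.count (α - 1) (nuGt t a r j) :=
        Multiset.one_le_count_iff_mem.mpr ((hmemGt _).2 ⟨m, ⟨hm1, hm2⟩, hα1m⟩)
      omega
    omega
  -- Goal 1 : nu j ⊆ I
  have hA : ∀ z ∈ nu t a j, z ∈ Iseg p q lam := by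
    intro z hz
    have hzb := (hnujchar z).1 hz
    exact (hIchar z).2
      ⟨le_trans hαlj hzb.1, le_trans hzb.2.1 (by linarith [hxb.2.1] : hjv ≤ β), hzb.2.2⟩
  -- Goal 2 : I ⊆ nuGt
  have hB : ∀ w ∈ Iseg p q lam, w ∈ nuGt t a r j := by
    intro w hwI
    by_contra hwG
    have hG0 : Multiset.count w (nuGt t a r j) = 0 := Multiset.count_eq_zero.mpr hwG
    have h2c := hc2 w hwI
    have hL := hcLle w
    have hwj : w ∈ nu t a j := by
      rw [← Multiset.one_le_count_iff_mem]
      omega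
    have hwb := (hnujchar w).1 hwj
    have hwm : w ∈ nu t a m :=
      (nu_char hgp (by omega) hm2).2
        ⟨by linarith [hlm, hwb.1], by linarith [hwb.2.1, hw'mb.2.1], hwb.2.2⟩
    exact hwG ((hmemGt w).2 ⟨m, ⟨hm1, hm2⟩, hwm⟩)
  refine ⟨hA, hB, ?_⟩
  -- Goal 3 : qj = 0
  have hfull : (nu t a j).filter (fun x => x ∈ nuGt t a r j) = nu t a j :=
    Multiset.filter_eq_self.mpr (fun u hu => hB u (hA u hu))
  rw [hfull, hcardnu, pj] at hfGt
  rw [qj]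
  omega
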